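/- Let p ≥ 3, n ≥ 6 and let V be a finite-dimensional FΣ_n-module. Let x_{2^2} = Σ_{g ∈ Σ_{3,3}} sgn(g) · g(2,5)(3,6)g^{-1} ∈ FΣ_n, where Σ_{3,3} is the Young subgroup permuting {1,2,3} and {4,5,6} and (2,5)(3,6) is the indicated product of transpositions. If x_{2^2}V ≠ 0, then there exists an FΣ_n-homomorphism ψ : M^{(n-4,2,2)} → End_F(V) which does not vanish on the Specht module S^{(n-4,2,2)} ⊆ M^{(n-4,2,2)}. -/

import Mathlib

open scoped Classical

noncomputable section

namespace IrrTensor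

/-! ### Partitions as finitely supported functions `ℕ →₀ ℕ` (0-indexed rows) -/

abbrev Ptn := ℕ →₀ ℕ

/-- `f` is weakly decreasing, i.e. a genuine partition shape. -/
def IsPtn (f : Ptn) : Prop := ∀ ⦃i j : ℕ⦄, i ≤ j → f j ≤ f i

/-- `f` is a partition of `n`. -/
def IsPtnOf (f : Ptn) (n : ℕ) : Prop := IsPtn f ∧ f.sum (fun _ m => m) = n

/-- `p`-regular: no (positive) part is repeated `p` or more times. -/
def PReg (p : ℕ) (f : Ptn) : Prop :=
  ∀ v : ℕ, 0 < v → (f.support.filter (fun i => f i = v)).card < p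

/-- the number of (nonzero) parts of `f`. -/
def height (f : Ptn) : ℕ := f.support.card

/-- row `r` carries a removable node, namely `(r, f r - 1)` (0-indexed). -/
def RemovableAt (f : Ptn) (r : ℕ) : Prop := f (r + 1) < f r

/-- row `r` carries an addable node, namely `(r, f r)` (0-indexed). -/
def AddableAt (f : Ptn) (r : ℕ) : Prop := r = 0 ∨ f r < f (r - 1)

/-- residue of the removable node in row `r` (the residue of a node `(r, c)`,
both coordinates 0-indexed, is `c - r` mod `p`). -/
def resRem (p : ℕ) (f : Ptn) (r : ℕ) : ZMod p := ((f r - 1 : ℕ) : ZMod p) - (r : ZMod p)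

/-- residue of the addable node in row `r`. -/
def resAdd (p : ℕ) (f : Ptn) (r : ℕ) : ZMod p := ((f r : ℕ) : ZMod p) - (r : ZMod p)

/-- The removable node in row `r` is *normal*: every addable node of the same residue
strictly above it can be matched injectively with a distinct removable node of the same
residue strictly between them (the usual lattice/parenthesis condition). -/
def NormalAt (p : ℕ) (f : Ptn) (r : ℕ) : Prop :=
  RemovableAt f r ∧ ∃ m : ℕ → ℕ,
    Set.InjOn m {s | s < r ∧ AddableAt f s ∧ resAdd p f s = resRem p f r} ∧
    ∀ s, s < r → AddableAt f s → resAdd p f s = resRem p f r →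
      s < m s ∧ m s < r ∧ RemovableAt f (m s) ∧ resRem p f (m s) = resRem p f r

/-- The addable node in row `r` is *conormal* (the dual condition). -/
def ConormalAt (p : ℕ) (f : Ptn) (r : ℕ) : Prop :=
  AddableAt f r ∧ ∃ m : ℕ → ℕ,
    Set.InjOn m {s | r < s ∧ RemovableAt f s ∧ resRem p f s = resAdd p f r} ∧
    ∀ s, r < s → RemovableAt f s → resRem p f s = resAdd p f r →
      r < m s ∧ m s < s ∧ AddableAt f (m s) ∧ resAdd p f (m s) = resAdd p f r

/-- rows carrying a normal node of residue `i`. -/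
def normalRows (p : ℕ) (i : ZMod p) (f : Ptn) : Finset ℕ :=
  f.support.filter (fun r => NormalAt p f r ∧ resRem p f r = i)

/-- `ε_i(f)`: the number of normal nodes of residue `i`. -/
def eps (p : ℕ) (i : ZMod p) (f : Ptn) : ℕ := (normalRows p i f).card

/-- total number of normal nodes. -/
def normalCount (p : ℕ) (f : Ptn) : ℕ :=
  (f.support.filter (fun r => NormalAt p f r)).card

/-- JS-partition: exactly one normal node. -/
def IsJS (p : ℕ) (f : Ptn) : Prop := normalCount p f = 1

/-- remove a node from row `r`. -/
def removeAt (f : Ptn) (r : ℕ) : Ptn := f.update r (f r - 1)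

/-- `ẽ_i f`: remove the bottom normal node of residue `i` (junk value `f` if none). -/
def etilde (p : ℕ) (i : ZMod p) (f : Ptn) : Ptn :=
  if h : (normalRows p i f).Nonempty then removeAt f ((normalRows p i f).max' h) else f

def removableRows (f : Ptn) : Finset ℕ := f.support.filter (fun r => RemovableAt f r)

/-- remove the top removable node. -/
def removeTopNode (f : Ptn) : Ptn :=
  if h : (removableRows f).Nonempty then removeAt f ((removableRows f).min' h) else f

/-- add the bottom addable node (a new row of length 1 at the bottom). -/
def addBottomNode (f : Ptn) : Ptn := f.update f.support.card (f f.support.card + 1)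

/-- strict lexicographic order on partitions: `f <lex g`. -/
def lexLT (f g : Ptn) : Prop := ∃ k : ℕ, (∀ i < k, f i = g i) ∧ f k < g k

def lexLE (f g : Ptn) : Prop := f = g ∨ lexLT f g

/-- the number of nodes of `f` of residue `i` (the residue content). -/
def cnt (p : ℕ) (f : Ptn) (i : ZMod p) : ℕ :=
  ∑ r ∈ f.support, ((Finset.range (f r)).filter (fun c => ((c : ZMod p) - (r : ZMod p)) = i)).card

/-- the two-row partition `(a, b)`. -/
def twoRow (a b : ℕ) : Ptn := Finsupp.single 0 a + Finsupp.single 1 b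

/-- the three-row partition `(a, b, c)`. -/
def threeRow (a b c : ℕ) : Ptn :=
  Finsupp.single 0 a + Finsupp.single 1 b + Finsupp.single 2 c

/-! ### Representation-theoretic generalities -/

variable {F : Type} [Field F] {G : Type} [Group G]
variable {V W : Type} [AddCommGroup V] [Module F V] [AddCommGroup W] [Module F W]

/-- `U` is a subrepresentation of `ρ`. -/
def IsSubrep (ρ : Representation F G V) (U : Submodule F V) : Prop :=
  ∀ (g : G), ∀ v ∈ U, ρ g v ∈ U

/-- the representation induced on a subrepresentation. -/
def subRepn (ρ : Representation F G V) (U : Submodule F V) (h : IsSubrep ρ U) :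
    Representation F G ↥U where
  toFun g := (ρ g).restrict (fun v hv => h g v hv)
  map_one' := by
    ext v
    simp [LinearMap.restrict_apply]
  map_mul' g₁ g₂ := by
    ext v
    simp [LinearMap.restrict_apply]

/-- `f` is a homomorphism of representations from `ρ` to `σ`. -/
def IsRepHom (ρ : Representation F G V) (σ : Representation F G W) (f : V →ₗ[F] W) : Prop :=
  ∀ (g : G) (v : V), f (ρ g v) = σ g (f v)

/-- `ρ ≅ σ` as representations. -/
def RepIso (ρ : Representation F G V) (σ : Representation F G W) : Prop :=
  ∃ e : V ≃ₗ[F] W, IsRepHom ρ σ e.toLinearMap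

/-- irreducibility of a representation. -/
def Irr (ρ : Representation F G V) : Prop :=
  (⊥ : Submodule F V) ≠ ⊤ ∧ ∀ U : Submodule F V, IsSubrep ρ U → U = ⊥ ∨ U = ⊤

/-- the `F`-space of homomorphisms of representations `ρ → σ`. -/
def repHom (ρ : Representation F G V) (σ : Representation F G W) :
    Submodule F (V →ₗ[F] W) where
  carrier := {f | IsRepHom ρ σ f}
  add_mem' := by
    intro f g hf hg gg v
    simp only [LinearMap.add_apply, hf gg v, hg gg v, map_add]
  zero_mem' := by intro g v; simp
  smul_mem' := by
    intro c f hf g v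
    simp only [LinearMap.smul_apply, hf g v, map_smul]

/-- `dim Hom_G(ρ, σ)`. -/
def homDim (ρ : Representation F G V) (σ : Representation F G W) : ℕ :=
  Module.finrank F (repHom ρ σ)

/-- `dim End_G(ρ)`. -/
def endDim (ρ : Representation F G V) : ℕ := homDim ρ ρ

/-- restriction of a representation to a subgroup. -/
def resRep (ρ : Representation F G V) (H : Subgroup G) : Representation F H V :=
  ρ.comp H.subtype

/-- a bundled representation of `G` over `F`. -/
structure RepOb (F : Type) [Field F] (G : Type) [Group G] where
  carrier : Type
  [acg : AddCommGroup carrier]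
  [mod : Module F carrier]
  rep : Representation F G carrier

attribute [instance] RepOb.acg RepOb.mod

def RepOb.of (ρ : Representation F G V) : RepOb F G :=
  { carrier := V, rep := ρ }

/-- direct sum of two representations. -/
def prodRep (ρ : Representation F G V) (σ : Representation F G W) :
    Representation F G (V × W) where
  toFun g := (ρ g).prodMap (σ g)
  map_one' := by
    ext v <;> simp
  map_mul' g h := by
    ext v <;> simp

/-- direct sum of a family of representations. -/
def piRep {ι : Type} (M : ι → RepOb F G) : Representation F G (∀ i, (M i).carrier) where
  toFun g := LinearMap.pi fun i => ((M i).rep g).comp (LinearMap.proj i)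
  map_one' := by
    ext v i
    simp
  map_mul' g h := by
    ext v i
    simp

/-- `σ` is (isomorphic to) a composition factor of `ρ`, i.e. a quotient of a
subrepresentation. -/
def IsCompFactor (ρ : Representation F G V) (σ : Representation F G W) : Prop :=
  ∃ (U : Submodule F V) (hU : IsSubrep ρ U) (ψ : ↥U →ₗ[F] W),
    Function.Surjective ψ ∧ IsRepHom (subRepn ρ U hU) σ ψ

/-- `σ` embeds into `ρ` (is isomorphic to a subrepresentation). -/
def Embeds (σ : Representation F G W) (ρ : Representation F G V) : Prop :=
  ∃ f : W →ₗ[F] V, Function.Injective f ∧ IsRepHom σ ρ f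

/-- `σ` is a quotient of `ρ`. -/
def IsQuotientRep (ρ : Representation F G V) (σ : Representation F G W) : Prop :=
  ∃ f : V →ₗ[F] W, Function.Surjective f ∧ IsRepHom ρ σ f

/-- `σ` is a direct summand of `ρ`. -/
def IsSummandRep (ρ : Representation F G V) (σ : Representation F G W) : Prop :=
  ∃ C : RepOb F G, RepIso ρ (prodRep σ C.rep)

/-- `U` is a simple subrepresentation. -/
def IsSimpleSubrep (ρ : Representation F G V) (U : Submodule F V) : Prop :=
  IsSubrep ρ U ∧ U ≠ ⊥ ∧ ∀ U' ≤ U, IsSubrep ρ U' → U' = ⊥ ∨ U' = U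

/-- the socle: the sum of all simple subrepresentations. -/
def socle (ρ : Representation F G V) : Submodule F V := sSup {U | IsSimpleSubrep ρ U}

/-- `ρ` has simple socle. -/
def HasSimpleSocle (ρ : Representation F G V) : Prop := IsSimpleSubrep ρ (socle ρ)

/-! ### Symmetric and alternating groups, Young subgroups, permutation and Specht modules -/

/-- the sign representation of the symmetric group. -/
def sgnRep (F : Type) [Field F] (n : ℕ) : Representation F (Equiv.Perm (Fin n)) F where
  toFun g := ((Equiv.Perm.sign g : ℤ) : F) • LinearMap.id
  map_one' := by
    simp [Module.End.one_eq_id]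
  map_mul' g h := by
    ext
    simp [mul_comm, mul_assoc, mul_smul]

/-- restriction of a representation of `Σ_n` to the alternating group `A_n`. -/
def resAlt {n : ℕ} (ρ : Representation F (Equiv.Perm (Fin n)) V) :
    Representation F (alternatingGroup (Fin n)) V :=
  ρ.comp (alternatingGroup (Fin n)).subtype

/-- transport of permutations along an equivalence, as a monoid homomorphism. -/
def permCongrHom {α β : Type} (e : α ≃ β) : Equiv.Perm α →* Equiv.Perm β where
  toFun g := (e.symm.trans g).trans e
  map_one' := by ext x; simp
  map_mul' g h := by ext x; simp

/-- the standard embedding `Σ_a × Σ_b → Σ_n` (for `a + b = n`), with `Σ_a` acting on the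
first `a` points and `Σ_b` on the last `b` points; its image is the Young subgroup
`Σ_{(a,b)}`. -/
def youngPairHom (a b n : ℕ) (h : a + b = n) :
    Equiv.Perm (Fin a) × Equiv.Perm (Fin b) →* Equiv.Perm (Fin n) :=
  (permCongrHom (finSumFinEquiv.trans (finCongr h))).comp (Equiv.Perm.sumCongrHom (Fin a) (Fin b))

/-- the standard embedding `Σ_m → Σ_n` for `m ≤ n`. -/
def stdEmbed (m n : ℕ) (h : m + (n - m) = n) : Equiv.Perm (Fin m) →* Equiv.Perm (Fin n) :=
  (youngPairHom m (n - m) n h).comp (MonoidHom.inl _ _)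

/-- the outer tensor product of a representation of `A` and one of `B`, as a
representation of `A × B`. -/
def outerTensor {A B : Type} [Group A] [Group B]
    (ρ : Representation F A V) (σ : Representation F B W) :
    Representation F (A × B) (TensorProduct F V W) :=
  Representation.tprod
    (ρ.comp (MonoidHom.fst A B) : Representation F (A × B) V)
    (σ.comp (MonoidHom.snd A B) : Representation F (A × B) W)

/-- the index of the interval block of the composition `α` containing `x`
(blocks `{0, …, α₀ - 1}`, `{α₀, …, α₀ + α₁ - 1}`, …). -/
def blockOf (α : Ptn) (x : ℕ) : ℕ := sInf {i | x < ∑ j ∈ Finset.range (i + 1), α j}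

/-- the position of `x` inside its block: the column of `x` in the tableau obtained by
filling the Young diagram of `α` row by row with `0, 1, 2, …`. -/
def colOf (α : Ptn) (x : ℕ) : ℕ := x - ∑ j ∈ Finset.range (blockOf α x), α j

/-- the Young subgroup `Σ_α ≤ Σ_n`: permutations preserving each interval block. -/
def youngSubgroup (α : Ptn) (n : ℕ) : Subgroup (Equiv.Perm (Fin n)) where
  carrier := {g | ∀ x : Fin n, blockOf α ((g x : Fin n) : ℕ) = blockOf α (x : ℕ)}
  one_mem' := by intro x; simp
  mul_mem' := by
    intro g h hg hh x
    simpa [Equiv.Perm.mul_apply] using (hg (h x)).trans (hh x)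
  inv_mem' := by
    intro g hg x
    simpa using (hg (g⁻¹ x)).symm

/-- the permutation module `M^α = 1 ↑_{Σ_α}^{Σ_n}`, realized on the cosets
`Σ_n / Σ_α` (whose elements are the `α`-tabloids). -/
def permRep (F : Type) [Field F] (α : Ptn) (n : ℕ) :
    Representation F (Equiv.Perm (Fin n))
      ((Equiv.Perm (Fin n) ⧸ youngSubgroup α n) →₀ F) where
  toFun g := Finsupp.lmapDomain F F (g • · : Equiv.Perm (Fin n) ⧸ youngSubgroup α n → _)
  map_one' := by
    ext x y
    simp
  map_mul' g h := by
    ext x y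
    simp [mul_smul]

/-- the polytabloid attached to the identity tableau: the signed column sum
`e_{t₀} = ∑_{τ ∈ C_{t₀}} sgn(τ) {τ t₀}`. -/
def spechtGen (F : Type) [Field F] (α : Ptn) (n : ℕ) :
    (Equiv.Perm (Fin n) ⧸ youngSubgroup α n) →₀ F :=
  ∑ τ ∈ Finset.univ.filter
      (fun τ : Equiv.Perm (Fin n) => ∀ x : Fin n, colOf α ((τ x : Fin n) : ℕ) = colOf α (x : ℕ)),
    ((Equiv.Perm.sign τ : ℤ) : F) • Finsupp.single (QuotientGroup.mk τ) 1

/-- the Specht module `S^α ⊆ M^α`: the span of all polytabloids. -/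
def spechtSubmodule (F : Type) [Field F] (α : Ptn) (n : ℕ) :
    Submodule F ((Equiv.Perm (Fin n) ⧸ youngSubgroup α n) →₀ F) :=
  Submodule.span F (Set.range fun g : Equiv.Perm (Fin n) => permRep F α n g (spechtGen F α n))

/-! ### Axiomatic interface for the modular irreducible representations `D^λ`

The family `D^λ` (for `λ` `p`-regular of `n`) is characterized (uniquely, up to
isomorphism) by: each `D^λ` is irreducible, they are pairwise non-isomorphic and exhaust
all irreducibles, `D^λ` occurs as a composition factor of the permutation module `M^λ`,
and every composition factor `D^μ` of `M^λ` satisfies `μ ≥ λ` lexicographically.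
The Mullineux map is characterized by `D^{λ^M} ≅ D^λ ⊗ sgn`. -/
structure SMTheory (F : Type) [Field F] (p n : ℕ) where
  D : Ptn → RepOb F (Equiv.Perm (Fin n))
  mull : Ptn → Ptn
  D_irr : ∀ lam, IsPtnOf lam n → PReg p lam → Irr (D lam).rep
  D_inj : ∀ lam mu, IsPtnOf lam n → PReg p lam → IsPtnOf mu n → PReg p mu →
    RepIso (D lam).rep (D mu).rep → lam = mu
  D_exh : ∀ (W : Type) [AddCommGroup W] [Module F W]
    (σ : Representation F (Equiv.Perm (Fin n)) W), Irr σ →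
      ∃ lam, IsPtnOf lam n ∧ PReg p lam ∧ RepIso σ (D lam).rep
  D_perm : ∀ lam, IsPtnOf lam n → PReg p lam → IsCompFactor (permRep F lam n) (D lam).rep
  D_tri : ∀ lam mu, IsPtnOf lam n → PReg p lam → IsPtnOf mu n → PReg p mu →
    IsCompFactor (permRep F lam n) (D mu).rep → lexLE lam mu
  mull_reg : ∀ lam, IsPtnOf lam n → PReg p lam →
    IsPtnOf (mull lam) n ∧ PReg p (mull lam)
  mull_spec : ∀ lam, IsPtnOf lam n → PReg p lam →
    RepIso (D (mull lam)).rep ((D lam).rep.tprod (sgnRep F n))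

/-! ### Auxiliary material for Statement 16 -/

section Statement16Aux

lemma threeRow_apply' (a b c j : ℕ) :
    threeRow a b c j = if j = 0 then a else if j = 1 then b else if j = 2 then c else 0 := by
  unfold threeRow
  rcases j with _ | _ | _ | j <;> simp [Finsupp.single_apply]

lemma sum_threeRow (n : ℕ) (hn : 6 ≤ n) (k : ℕ) :
    ∑ j ∈ Finset.range (k + 1), threeRow (n - 4) 2 2 j
      = if k = 0 then n - 4 else if k = 1 then n - 2 else n := by
  induction k with
  | zero => simp [threeRow_apply']
  | succ k ih =>
    rw [Finset.sum_range_succ, ih]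
    rcases k with _ | _ | k <;> simp [threeRow_apply'] <;> omega

lemma blockOf_alph (n : ℕ) (hn : 6 ≤ n) (x : ℕ) (hx : x < n) :
    blockOf (threeRow (n - 4) 2 2) x = if x < n - 4 then 0 else if x < n - 2 then 1 else 2 := by
  have hs := sum_threeRow n hn
  unfold blockOf
  set S : Set ℕ := {i | x < ∑ j ∈ Finset.range (i + 1), threeRow (n - 4) 2 2 j} with hS
  have hm0 : 0 ∈ S ↔ x < n - 4 := by rw [hS, Set.mem_setOf_eq, hs 0]; norm_num
  have hm1 : 1 ∈ S ↔ x < n - 2 := by rw [hS, Set.mem_setOf_eq, hs 1]; norm_num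
  have hm2 : 2 ∈ S ↔ x < n := by rw [hS, Set.mem_setOf_eq, hs 2]; norm_num
  split_ifs with h1 h2
  · exact Nat.sInf_eq_zero.2 (Or.inl (hm0.2 h1))
  · have h1' : 1 ∈ S := hm1.2 h2
    have hle := Nat.sInf_le h1'
    have hin := Nat.sInf_mem (⟨1, h1'⟩ : S.Nonempty)
    have hne0 : sInf S ≠ 0 := fun h => absurd (hm0.1 (h ▸ hin)) h1
    omega
  · have h2' : 2 ∈ S := hm2.2 hx
    have hle := Nat.sInf_le h2'
    have hin := Nat.sInf_mem (⟨2, h2'⟩ : S.Nonempty)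
    have hne0 : sInf S ≠ 0 := fun h => absurd (hm0.1 (h ▸ hin)) (by omega)
    have hne1 : sInf S ≠ 1 := fun h => absurd (hm1.1 (h ▸ hin)) h2
    omega

lemma colOf_alph (n : ℕ) (hn : 6 ≤ n) (x : ℕ) (hx : x < n) :
    colOf (threeRow (n - 4) 2 2) x =
      if x < n - 4 then x else if x < n - 2 then x - (n - 4) else x - (n - 2) := by
  unfold colOf
  rw [blockOf_alph n hn x hx]
  split_ifs with h1 h2 <;>
    simp [Finset.sum_range_succ, Finset.sum_range_one, threeRow_apply'] <;> omega

lemma young_swap_conj (n : ℕ) (hn : 6 ≤ n) {h : Equiv.Perm (Fin n)}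
    (hh : h ∈ youngSubgroup (threeRow (n - 4) 2 2) n) :
    h * (Equiv.swap (⟨n - 4, by omega⟩ : Fin n) ⟨n - 3, by omega⟩ *
          Equiv.swap (⟨n - 2, by omega⟩ : Fin n) ⟨n - 1, by omega⟩) * h⁻¹ =
      Equiv.swap (⟨n - 4, by omega⟩ : Fin n) ⟨n - 3, by omega⟩ *
          Equiv.swap (⟨n - 2, by omega⟩ : Fin n) ⟨n - 1, by omega⟩ := by
  have hv : ∀ x : Fin n,
      (if ((h x : Fin n) : ℕ) < n - 4 then (0 : ℕ)
        else if ((h x : Fin n) : ℕ) < n - 2 then 1 else 2)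
        = if (x : ℕ) < n - 4 then 0 else if (x : ℕ) < n - 2 then 1 else 2 := by
    intro x
    rw [← blockOf_alph n hn _ (h x).isLt, ← blockOf_alph n hn _ x.isLt]
    exact hh x
  have hrow : ∀ (u : Fin n) (k : ℕ), (u : ℕ) = k → n - 4 ≤ k → k ≤ n - 3 →
      ((h u : Fin n) : ℕ) = n - 4 ∨ ((h u : Fin n) : ℕ) = n - 3 := by
    intro u k hk h1 h2
    have h3 := hv u
    rw [hk, if_neg (by omega : ¬ (k < n - 4)), if_pos (by omega : k < n - 2)] at h3
    by_cases p1 : ((h u : Fin n) : ℕ) < n - 4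
    · rw [if_pos p1] at h3; omega
    · rw [if_neg p1] at h3
      by_cases p2 : ((h u : Fin n) : ℕ) < n - 2
      · omega
      · rw [if_neg p2] at h3; omega
  have hrow2 : ∀ (u : Fin n) (k : ℕ), (u : ℕ) = k → n - 2 ≤ k → k < n →
      ((h u : Fin n) : ℕ) = n - 2 ∨ ((h u : Fin n) : ℕ) = n - 1 := by
    intro u k hk h1 h2
    have h3 := hv u
    rw [hk, if_neg (by omega : ¬ (k < n - 4)), if_neg (by omega : ¬ (k < n - 2))] at h3
    have hlt := (h u).isLt
    by_cases p1 : ((h u : Fin n) : ℕ) < n - 4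
    · rw [if_pos p1] at h3; omega
    · rw [if_neg p1] at h3
      by_cases p2 : ((h u : Fin n) : ℕ) < n - 2
      · rw [if_pos p2] at h3; omega
      · omega
  have ha' : ((h ⟨n - 4, by omega⟩ : Fin n) : ℕ) = n - 4 ∨
      ((h ⟨n - 4, by omega⟩ : Fin n) : ℕ) = n - 3 :=
    hrow ⟨n - 4, by omega⟩ (n - 4) rfl (by omega) (by omega)
  have hb' : ((h ⟨n - 3, by omega⟩ : Fin n) : ℕ) = n - 4 ∨
      ((h ⟨n - 3, by omega⟩ : Fin n) : ℕ) = n - 3 :=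
    hrow ⟨n - 3, by omega⟩ (n - 3) rfl (by omega) (by omega)
  have hc' : ((h ⟨n - 2, by omega⟩ : Fin n) : ℕ) = n - 2 ∨
      ((h ⟨n - 2, by omega⟩ : Fin n) : ℕ) = n - 1 :=
    hrow2 ⟨n - 2, by omega⟩ (n - 2) rfl (by omega) (by omega)
  have hd' : ((h ⟨n - 1, by omega⟩ : Fin n) : ℕ) = n - 2 ∨
      ((h ⟨n - 1, by omega⟩ : Fin n) : ℕ) = n - 1 :=
    hrow2 ⟨n - 1, by omega⟩ (n - 1) rfl (by omega) (by omega)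
  have hsab : Equiv.swap (h ⟨n - 4, by omega⟩) (h ⟨n - 3, by omega⟩)
      = Equiv.swap (⟨n - 4, by omega⟩ : Fin n) ⟨n - 3, by omega⟩ := by
    rcases ha' with h1 | h1 <;> rcases hb' with h2 | h2
    · exact absurd (show (n - 4 : ℕ) = (n - 3 : ℕ)
        from congrArg Fin.val (h.injective (Fin.ext (h1.trans h2.symm)))) (by omega)
    · rw [show h ⟨n - 4, by omega⟩ = (⟨n - 4, by omega⟩ : Fin n) from Fin.ext h1,
        show h ⟨n - 3, by omega⟩ = (⟨n - 3, by omega⟩ : Fin n) from Fin.ext h2]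
    · rw [show h ⟨n - 4, by omega⟩ = (⟨n - 3, by omega⟩ : Fin n) from Fin.ext h1,
        show h ⟨n - 3, by omega⟩ = (⟨n - 4, by omega⟩ : Fin n) from Fin.ext h2,
        Equiv.swap_comm]
    · exact absurd (show (n - 4 : ℕ) = (n - 3 : ℕ)
        from congrArg Fin.val (h.injective (Fin.ext (h1.trans h2.symm)))) (by omega)
  have hscd : Equiv.swap (h ⟨n - 2, by omega⟩) (h ⟨n - 1, by omega⟩)
      = Equiv.swap (⟨n - 2, by omega⟩ : Fin n) ⟨n - 1, by omega⟩ := by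
    rcases hc' with h1 | h1 <;> rcases hd' with h2 | h2
    · exact absurd (show (n - 2 : ℕ) = (n - 1 : ℕ)
        from congrArg Fin.val (h.injective (Fin.ext (h1.trans h2.symm)))) (by omega)
    · rw [show h ⟨n - 2, by omega⟩ = (⟨n - 2, by omega⟩ : Fin n) from Fin.ext h1,
        show h ⟨n - 1, by omega⟩ = (⟨n - 1, by omega⟩ : Fin n) from Fin.ext h2]
    · rw [show h ⟨n - 2, by omega⟩ = (⟨n - 1, by omega⟩ : Fin n) from Fin.ext h1,
        show h ⟨n - 1, by omega⟩ = (⟨n - 2, by omega⟩ : Fin n) from Fin.ext h2,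
        Equiv.swap_comm]
    · exact absurd (show (n - 2 : ℕ) = (n - 1 : ℕ)
        from congrArg Fin.val (h.injective (Fin.ext (h1.trans h2.symm)))) (by omega)
  calc h * (Equiv.swap (⟨n - 4, by omega⟩ : Fin n) ⟨n - 3, by omega⟩ *
          Equiv.swap (⟨n - 2, by omega⟩ : Fin n) ⟨n - 1, by omega⟩) * h⁻¹
      = (h * Equiv.swap (⟨n - 4, by omega⟩ : Fin n) ⟨n - 3, by omega⟩ * h⁻¹) *
        (h * Equiv.swap (⟨n - 2, by omega⟩ : Fin n) ⟨n - 1, by omega⟩ * h⁻¹) := by group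
    _ = Equiv.swap (h ⟨n - 4, by omega⟩) (h ⟨n - 3, by omega⟩) *
        Equiv.swap (h ⟨n - 2, by omega⟩) (h ⟨n - 1, by omega⟩) := by
          rw [← Equiv.swap_apply_apply, ← Equiv.swap_apply_apply]
    _ = Equiv.swap (⟨n - 4, by omega⟩ : Fin n) ⟨n - 3, by omega⟩ *
        Equiv.swap (⟨n - 2, by omega⟩ : Fin n) ⟨n - 1, by omega⟩ := by rw [hsab, hscd]

/-- the permutation `π` conjugating the standard `Σ_{3,3}` to the column stabilizer. -/
def pf (n x : ℕ) : ℕ :=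
  if x = 0 then 0 else if x = 1 then n - 4 else if x = 2 then n - 2
  else if x = 3 then 1 else if x = 4 then n - 3 else if x = 5 then n - 1 else x - 4

def pg (n y : ℕ) : ℕ :=
  if y = 0 then 0 else if y = 1 then 3 else if y = n - 4 then 1
  else if y = n - 3 then 4 else if y = n - 2 then 2 else if y = n - 1 then 5 else y + 4

lemma pf_lt (n : ℕ) (hn : 6 ≤ n) (x : ℕ) (hx : x < n) : pf n x < n := by
  unfold pf; split_ifs <;> omega

lemma pg_lt (n : ℕ) (hn : 6 ≤ n) (y : ℕ) (hy : y < n) : pg n y < n := by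
  unfold pg; split_ifs <;> omega

lemma pg_pf (n : ℕ) (hn : 6 ≤ n) (x : ℕ) (hx : x < n) : pg n (pf n x) = x := by
  rcases (by omega : x = 0 ∨ x = 1 ∨ x = 2 ∨ x = 3 ∨ x = 4 ∨ x = 5 ∨ 6 ≤ x) with
    rfl | rfl | rfl | rfl | rfl | rfl | h6
  · have h : pf n 0 = 0 := by norm_num [pf]
    rw [h]; unfold pg; rw [if_pos rfl]
  · have h : pf n 1 = n - 4 := by norm_num [pf]
    rw [h]; unfold pg
    rw [if_neg (by omega), if_neg (by omega), if_pos rfl]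
  · have h : pf n 2 = n - 2 := by norm_num [pf]
    rw [h]; unfold pg
    rw [if_neg (by omega), if_neg (by omega), if_neg (by omega), if_neg (by omega), if_pos rfl]
  · have h : pf n 3 = 1 := by norm_num [pf]
    rw [h]; unfold pg
    rw [if_neg (by omega), if_pos rfl]
  · have h : pf n 4 = n - 3 := by norm_num [pf]
    rw [h]; unfold pg
    rw [if_neg (by omega), if_neg (by omega), if_neg (by omega), if_pos rfl]
  · have h : pf n 5 = n - 1 := by norm_num [pf]
    rw [h]; unfold pg
    rw [if_neg (by omega), if_neg (by omega), if_neg (by omega), if_neg (by omega),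
      if_neg (by omega), if_pos rfl]
  · have h : pf n x = x - 4 := by
      unfold pf
      rw [if_neg (by omega), if_neg (by omega), if_neg (by omega), if_neg (by omega),
        if_neg (by omega), if_neg (by omega)]
    rw [h]; unfold pg
    rw [if_neg (by omega), if_neg (by omega), if_neg (by omega), if_neg (by omega),
      if_neg (by omega), if_neg (by omega)]
    omega

lemma pf_pg (n : ℕ) (hn : 6 ≤ n) (y : ℕ) (hy : y < n) : pf n (pg n y) = y := by
  unfold pg
  by_cases c0 : y = 0
  · rw [if_pos c0, c0]; norm_num [pf]
  rw [if_neg c0]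
  by_cases c1 : y = 1
  · rw [if_pos c1, c1]; norm_num [pf]
  rw [if_neg c1]
  by_cases c2 : y = n - 4
  · rw [if_pos c2, c2]; norm_num [pf]
  rw [if_neg c2]
  by_cases c3 : y = n - 3
  · rw [if_pos c3, c3]; norm_num [pf]
  rw [if_neg c3]
  by_cases c4 : y = n - 2
  · rw [if_pos c4, c4]; norm_num [pf]
  rw [if_neg c4]
  by_cases c5 : y = n - 1
  · rw [if_pos c5, c5]; norm_num [pf]
  rw [if_neg c5]
  unfold pf
  rw [if_neg (by omega), if_neg (by omega), if_neg (by omega), if_neg (by omega),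
    if_neg (by omega), if_neg (by omega)]
  omega

def pPerm (n : ℕ) (hn : 6 ≤ n) : Equiv.Perm (Fin n) where
  toFun x := ⟨pf n x, pf_lt n hn x x.isLt⟩
  invFun y := ⟨pg n y, pg_lt n hn y y.isLt⟩
  left_inv x := Fin.ext (pg_pf n hn x x.isLt)
  right_inv y := Fin.ext (pf_pg n hn y y.isLt)

lemma pPerm_coe (n : ℕ) (hn : 6 ≤ n) (x : Fin n) :
    ((pPerm n hn x : Fin n) : ℕ) = pf n (x : ℕ) := rfl

lemma colOf_pf (n : ℕ) (hn : 6 ≤ n) (z : ℕ) (hz : z < n) :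
    colOf (threeRow (n - 4) 2 2) (pf n z)
      = if z < 3 then 0 else if z < 6 then 1 else z - 4 := by
  rw [colOf_alph n hn _ (pf_lt n hn z hz)]
  unfold pf; split_ifs <;> omega

lemma perm_sign_conj {n : ℕ} (π g : Equiv.Perm (Fin n)) :
    Equiv.Perm.sign (π * g * π⁻¹) = Equiv.Perm.sign g := by
  have key : ∀ u v : ℤˣ, u * v * u = v := fun u v => by
    rw [mul_comm u v, mul_assoc, Int.units_mul_self, mul_one]
  rw [Equiv.Perm.sign_mul, Equiv.Perm.sign_mul, Equiv.Perm.sign_inv]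
  exact key _ _

lemma mem_colstab_iff (n : ℕ) (hn : 6 ≤ n) (g : Equiv.Perm (Fin n)) :
    (∀ x : Fin n, colOf (threeRow (n - 4) 2 2)
        (((pPerm n hn * g * (pPerm n hn)⁻¹) x : Fin n) : ℕ)
        = colOf (threeRow (n - 4) 2 2) (x : ℕ))
      ↔ (∀ x : Fin n, ((x : ℕ) < 3 → ((g x : Fin n) : ℕ) < 3) ∧
          (3 ≤ (x : ℕ) → (x : ℕ) < 6 → 3 ≤ ((g x : Fin n) : ℕ) ∧ ((g x : Fin n) : ℕ) < 6) ∧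
          (6 ≤ (x : ℕ) → g x = x)) := by
  constructor
  · intro H x
    have hx := H (pPerm n hn x)
    have hmul : (pPerm n hn * g * (pPerm n hn)⁻¹) (pPerm n hn x) = pPerm n hn (g x) := by
      simp [Equiv.Perm.mul_apply]
    rw [hmul, pPerm_coe, pPerm_coe, colOf_pf n hn _ (g x).isLt, colOf_pf n hn _ x.isLt] at hx
    refine ⟨fun h1 => ?_, fun h1 h2 => ?_, fun h1 => ?_⟩
    · split_ifs at hx <;> omega
    · constructor <;> (split_ifs at hx <;> omega)
    · have hgx : ((g x : Fin n) : ℕ) = (x : ℕ) := by split_ifs at hx <;> omega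
      exact Fin.ext hgx
  · intro H x
    obtain ⟨h1, h2, h3⟩ := H ((pPerm n hn)⁻¹ x)
    have hmul : (pPerm n hn * g * (pPerm n hn)⁻¹) x = pPerm n hn (g ((pPerm n hn)⁻¹ x)) := by
      simp [Equiv.Perm.mul_apply]
    rw [hmul]
    conv_rhs => rw [← (show (pPerm n hn) ((pPerm n hn)⁻¹ x) = x by simp)]
    rw [pPerm_coe, pPerm_coe, colOf_pf n hn _ (g ((pPerm n hn)⁻¹ x)).isLt,
      colOf_pf n hn _ ((pPerm n hn)⁻¹ x).isLt]
    by_cases h6 : 6 ≤ (((pPerm n hn)⁻¹ x : Fin n) : ℕ)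
    · rw [h3 h6]
    · by_cases h3' : (((pPerm n hn)⁻¹ x : Fin n) : ℕ) < 3
      · have := h1 h3'; split_ifs <;> omega
      · have := h2 (by omega) (by omega); split_ifs <;> omega

set_option maxHeartbeats 1600000 in
lemma pPerm_conj_s (n : ℕ) (hn : 6 ≤ n) :
    pPerm n hn * (Equiv.swap (⟨1, by omega⟩ : Fin n) ⟨4, by omega⟩ *
        Equiv.swap (⟨2, by omega⟩ : Fin n) ⟨5, by omega⟩) * (pPerm n hn)⁻¹
      = Equiv.swap (⟨n - 4, by omega⟩ : Fin n) ⟨n - 3, by omega⟩ *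
        Equiv.swap (⟨n - 2, by omega⟩ : Fin n) ⟨n - 1, by omega⟩ := by
  have key : ∀ u v w t : Fin n, pPerm n hn * (Equiv.swap u v * Equiv.swap w t) * (pPerm n hn)⁻¹
      = Equiv.swap (pPerm n hn u) (pPerm n hn v) * Equiv.swap (pPerm n hn w) (pPerm n hn t) := by
    intro u v w t
    rw [Equiv.swap_apply_apply, Equiv.swap_apply_apply]
    group
  rw [key]
  have e1 : pPerm n hn ⟨1, by omega⟩ = (⟨n - 4, by omega⟩ : Fin n) :=
    Fin.ext ((pPerm_coe n hn ⟨1, by omega⟩).trans (show pf n 1 = n - 4 by norm_num [pf]))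
  have e4 : pPerm n hn ⟨4, by omega⟩ = (⟨n - 3, by omega⟩ : Fin n) :=
    Fin.ext ((pPerm_coe n hn ⟨4, by omega⟩).trans (show pf n 4 = n - 3 by norm_num [pf]))
  have e2 : pPerm n hn ⟨2, by omega⟩ = (⟨n - 2, by omega⟩ : Fin n) :=
    Fin.ext ((pPerm_coe n hn ⟨2, by omega⟩).trans (show pf n 2 = n - 2 by norm_num [pf]))
  have e5 : pPerm n hn ⟨5, by omega⟩ = (⟨n - 1, by omega⟩ : Fin n) :=
    Fin.ext ((pPerm_coe n hn ⟨5, by omega⟩).trans (show pf n 5 = n - 1 by norm_num [pf]))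
  rw [e1, e4, e2, e5]

/-- Construction of the homomorphism `ψ : M^{(n-4,2,2)} → End_F(V)` together with the value
of `ψ` on the standard polytabloid. -/
lemma exists_psi (F : Type) [Field F] (n : ℕ) (hn : 6 ≤ n)
    (V : Type) [AddCommGroup V] [Module F V]
    (ρ : Representation F (Equiv.Perm (Fin n)) V) :
    ∃ ψ : ((Equiv.Perm (Fin n) ⧸ youngSubgroup (threeRow (n - 4) 2 2) n) →₀ F) →ₗ[F]
        (V →ₗ[F] V),
      IsRepHom (permRep F (threeRow (n - 4) 2 2) n) (ρ.linHom ρ) ψ ∧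
      ψ (spechtGen F (threeRow (n - 4) 2 2) n)
        = ∑ τ ∈ Finset.univ.filter
            (fun τ : Equiv.Perm (Fin n) => ∀ x : Fin n,
              colOf (threeRow (n - 4) 2 2) ((τ x : Fin n) : ℕ)
                = colOf (threeRow (n - 4) 2 2) (x : ℕ)),
          ((Equiv.Perm.sign τ : ℤ) : F) •
            ρ (τ * (Equiv.swap (⟨n - 4, by omega⟩ : Fin n) ⟨n - 3, by omega⟩ *
                Equiv.swap (⟨n - 2, by omega⟩ : Fin n) ⟨n - 1, by omega⟩) * τ⁻¹) := by
  classical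
  set r : Equiv.Perm (Fin n) :=
    Equiv.swap (⟨n - 4, by omega⟩ : Fin n) ⟨n - 3, by omega⟩ *
      Equiv.swap (⟨n - 2, by omega⟩ : Fin n) ⟨n - 1, by omega⟩ with hr
  have hconj : ∀ h ∈ youngSubgroup (threeRow (n - 4) 2 2) n, h * r * h⁻¹ = r :=
    fun h hh => young_swap_conj n hn hh
  let Φ : (Equiv.Perm (Fin n) ⧸ youngSubgroup (threeRow (n - 4) 2 2) n) → (V →ₗ[F] V) :=
    fun q => Quotient.liftOn' q (fun g => ρ (g * r * g⁻¹)) (by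
      intro g₁ g₂ hrel
      show ρ (g₁ * r * g₁⁻¹) = ρ (g₂ * r * g₂⁻¹)
      have hmem : g₁⁻¹ * g₂ ∈ youngSubgroup (threeRow (n - 4) 2 2) n :=
        QuotientGroup.leftRel_apply.mp hrel
      have key := hconj _ hmem
      have h2 : g₂ * r * g₂⁻¹ = g₁ * (g₁⁻¹ * g₂ * r * (g₁⁻¹ * g₂)⁻¹) * g₁⁻¹ := by group
      rw [h2, key])
  have hΦ_mk : ∀ g : Equiv.Perm (Fin n), Φ (QuotientGroup.mk g) = ρ (g * r * g⁻¹) :=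
    fun g => rfl
  let ψ : ((Equiv.Perm (Fin n) ⧸ youngSubgroup (threeRow (n - 4) 2 2) n) →₀ F) →ₗ[F]
      (V →ₗ[F] V) := Finsupp.lift (V →ₗ[F] V) F _ Φ
  have hψ_single : ∀ q t, ψ (Finsupp.single q t) = t • Φ q := by
    intro q t
    simp [ψ, Finsupp.lift_apply, Finsupp.sum_single_index]
  refine ⟨ψ, ?_, ?_⟩
  · intro g v
    induction v using Finsupp.induction_linear with
    | zero => simp
    | add u w hu hw => simp only [map_add, hu, hw]
    | single q t =>
      obtain ⟨h, rfl⟩ := QuotientGroup.mk_surjective q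
      have h1 : permRep F (threeRow (n - 4) 2 2) n g (Finsupp.single (QuotientGroup.mk h) t)
          = Finsupp.single (QuotientGroup.mk (g * h)) t := by
        show Finsupp.lmapDomain F F _ (Finsupp.single _ t) = _
        rw [Finsupp.lmapDomain_apply, Finsupp.mapDomain_single]
        rfl
      rw [h1, hψ_single, hψ_single, hΦ_mk, hΦ_mk, map_smul, Representation.linHom_apply]
      simp only [← Module.End.mul_eq_comp, ← map_mul]
      have h2 : g * h * r * (g * h)⁻¹ = g * (h * r * h⁻¹) * g⁻¹ := by group
      rw [h2, mul_assoc]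
  · unfold spechtGen
    rw [map_sum]
    refine Finset.sum_congr rfl fun τ _ => ?_
    rw [map_smul, hψ_single, one_smul, hΦ_mk]

end Statement16Aux

/-- If the element `x_{2²} = Σ_{g ∈ Σ_{3,3}} sgn(g)·g(2,5)(3,6)g⁻¹`
of `FΣ_n` acts nonzero on `V`, then there is an `FΣ_n`-homomorphism
`ψ : M^{(n-4,2,2)} → End_F(V)` not vanishing on the Specht module `S^{(n-4,2,2)}`.
(Points are 0-indexed here, so `Σ_{3,3}` permutes `{0,1,2}` and `{3,4,5}` and fixes the
remaining points, and `(2,5)(3,6)` becomes the product of the transpositions `(1,4)` and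
`(2,5)`.) -/
theorem statement_16 (F : Type) [Field F] [IsAlgClosed F] (p : ℕ) (hp3 : 3 ≤ p)
    [CharP F p] (n : ℕ) (hn : 6 ≤ n)
    (V : Type) [AddCommGroup V] [Module F V]
    (ρ : Representation F (Equiv.Perm (Fin n)) V)
    (hx : (∑ g ∈ Finset.univ.filter
        (fun g : Equiv.Perm (Fin n) => ∀ x : Fin n,
          ((x : ℕ) < 3 → ((g x : Fin n) : ℕ) < 3) ∧
          (3 ≤ (x : ℕ) → (x : ℕ) < 6 → 3 ≤ ((g x : Fin n) : ℕ) ∧ ((g x : Fin n) : ℕ) < 6) ∧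
          (6 ≤ (x : ℕ) → g x = x)),
        ((Equiv.Perm.sign g : ℤ) : F) •
          ρ (g * (Equiv.swap (⟨1, by omega⟩ : Fin n) ⟨4, by omega⟩ *
                  Equiv.swap (⟨2, by omega⟩ : Fin n) ⟨5, by omega⟩) * g⁻¹)) ≠ 0) :
    ∃ ψ : ((Equiv.Perm (Fin n) ⧸ youngSubgroup (threeRow (n - 4) 2 2) n) →₀ F) →ₗ[F]
        (V →ₗ[F] V),
      IsRepHom (permRep F (threeRow (n - 4) 2 2) n) (ρ.linHom ρ) ψ ∧
      ∃ v ∈ spechtSubmodule F (threeRow (n - 4) 2 2) n, ψ v ≠ 0 := by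
  classical
  obtain ⟨ψ, hhom, hval⟩ := exists_psi F n hn V ρ
  refine ⟨ψ, hhom, spechtGen F (threeRow (n - 4) 2 2) n, Submodule.subset_span ⟨1, by simp⟩, ?_⟩
  intro h0
  refine hx ?_
  -- the hypothesis sum, written with our own proof terms (definitionally equal)
  have step : ρ (pPerm n hn) *
      (∑ g ∈ Finset.univ.filter
        (fun g : Equiv.Perm (Fin n) => ∀ x : Fin n,
          ((x : ℕ) < 3 → ((g x : Fin n) : ℕ) < 3) ∧
          (3 ≤ (x : ℕ) → (x : ℕ) < 6 → 3 ≤ ((g x : Fin n) : ℕ) ∧ ((g x : Fin n) : ℕ) < 6) ∧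
          (6 ≤ (x : ℕ) → g x = x)),
        ((Equiv.Perm.sign g : ℤ) : F) •
          ρ (g * (Equiv.swap (⟨1, by omega⟩ : Fin n) ⟨4, by omega⟩ *
                  Equiv.swap (⟨2, by omega⟩ : Fin n) ⟨5, by omega⟩) * g⁻¹)) *
      ρ (pPerm n hn)⁻¹
      = ∑ τ ∈ Finset.univ.filter
            (fun τ : Equiv.Perm (Fin n) => ∀ x : Fin n,
              colOf (threeRow (n - 4) 2 2) ((τ x : Fin n) : ℕ)
                = colOf (threeRow (n - 4) 2 2) (x : ℕ)),
          ((Equiv.Perm.sign τ : ℤ) : F) •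
            ρ (τ * (Equiv.swap (⟨n - 4, by omega⟩ : Fin n) ⟨n - 3, by omega⟩ *
                Equiv.swap (⟨n - 2, by omega⟩ : Fin n) ⟨n - 1, by omega⟩) * τ⁻¹) := by
    rw [Finset.mul_sum, Finset.sum_mul]
    refine Finset.sum_nbij' (i := fun g => pPerm n hn * g * (pPerm n hn)⁻¹)
      (j := fun τ => (pPerm n hn)⁻¹ * τ * pPerm n hn) ?_ ?_ ?_ ?_ ?_
    · intro g hg
      rw [Finset.mem_filter] at hg ⊢
      exact ⟨Finset.mem_univ _, (mem_colstab_iff n hn g).2 hg.2⟩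
    · intro τ hτ
      rw [Finset.mem_filter] at hτ ⊢
      refine ⟨Finset.mem_univ _, (mem_colstab_iff n hn _).1 ?_⟩
      have e : pPerm n hn * ((pPerm n hn)⁻¹ * τ * pPerm n hn) * (pPerm n hn)⁻¹ = τ := by group
      rw [e]
      exact hτ.2
    · intro g _; group
    · intro τ _; group
    · intro g _
      rw [mul_smul_comm, smul_mul_assoc, ← map_mul, ← map_mul, perm_sign_conj]
      congr 2
      rw [← pPerm_conj_s n hn]
      group
  have h1 : ρ (pPerm n hn)⁻¹ * ρ (pPerm n hn) = 1 := by
    rw [← map_mul, inv_mul_cancel, map_one]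
  have hconjback : ∀ A : Module.End F V,
      ρ (pPerm n hn)⁻¹ * (ρ (pPerm n hn) * A * ρ (pPerm n hn)⁻¹) * ρ (pPerm n hn) = A := by
    intro A
    calc ρ (pPerm n hn)⁻¹ * (ρ (pPerm n hn) * A * ρ (pPerm n hn)⁻¹) * ρ (pPerm n hn)
        = (ρ (pPerm n hn)⁻¹ * ρ (pPerm n hn)) * A *
          (ρ (pPerm n hn)⁻¹ * ρ (pPerm n hn)) := by noncomm_ring
      _ = A := by rw [h1, one_mul, mul_one]
  have hS2 : ∀ A : Module.End F V,
      ρ (pPerm n hn) * A * ρ (pPerm n hn)⁻¹ = 0 → A = 0 := by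
    intro A hA
    calc A = ρ (pPerm n hn)⁻¹ * (ρ (pPerm n hn) * A * ρ (pPerm n hn)⁻¹) * ρ (pPerm n hn) :=
          (hconjback A).symm
      _ = 0 := by rw [hA, mul_zero, zero_mul]
  refine hS2 _ ?_
  rw [step, ← hval]
  exact h0

end IrrTensor
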